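/- Extension lemma for superforms on polyhedral complexes: Let 𝒞 be a polyhedral complex in ℝ^r, Ω ⊂ |𝒞| open, and W ⊂ ℝ^r open with W ∩ |𝒞| = Ω. Then every superform on Ω (i.e., an equivalence class of superforms on open neighbourhoods V of Ω in ℝ^r, with V ∩ |𝒞| = Ω, identified when their restrictions to all polyhedra of 𝒞 agree on Ω) is the restriction of a superform in A^{p,q}(W). Equivalently: given V ⊂ W open with V ∩ |𝒞| = Ω and β ∈ A^{p,q}(V), there exists β̃ ∈ A^{p,q}(W) whose restriction to every σ ∩ Ω (σ ∈ 𝒞) agrees with that of β. -/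

import Mathlib

open Set

noncomputable section

abbrev Vec (r : ℕ) : Type := Fin r → ℝ

/-- The data of a superform of bidegree `(p,q)` on `ℝ^r`: a pointwise evaluation
on `p` tangent vectors (the `d'`-block) and `q` tangent vectors (the `d''`-block). -/
abbrev SFd (r p q : ℕ) : Type :=
  Vec r → (Fin p → Vec r) → (Fin q → Vec r) → ℝ

/-- `g` is multilinear and alternating in its `n` vector arguments. -/
def IsAltML {r n : ℕ} (g : (Fin n → Vec r) → ℝ) : Prop :=
  (∀ (v : Fin n → Vec r) (i : Fin n) (x y : Vec r),
      g (Function.update v i (x + y)) =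
        g (Function.update v i x) + g (Function.update v i y)) ∧
  (∀ (v : Fin n → Vec r) (i : Fin n) (c : ℝ) (x : Vec r),
      g (Function.update v i (c • x)) = c * g (Function.update v i x)) ∧
  (∀ (v : Fin n → Vec r) (i j : Fin n), i ≠ j → v i = v j → g v = 0)

/-- `α` is a smooth superform of bidegree `(p,q)` on the set `U ⊆ ℝ^r`. -/
def IsSuperformOn {r p q : ℕ} (U : Set (Vec r)) (α : SFd r p q) : Prop :=
  (∀ x ∈ U, ∀ w, IsAltML fun v => α x v w) ∧
  (∀ x ∈ U, ∀ v, IsAltML fun w => α x v w) ∧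
  ∀ v w, ContDiffOn ℝ (⊤ : ℕ∞) (fun x => α x v w) U

/-- The differential `d'` of superforms, acting on the `d'`-block. -/
def dP {r p q : ℕ} (α : SFd r p q) : SFd r (p + 1) q := fun x v w =>
  ∑ i : Fin (p + 1),
    (-1 : ℝ) ^ (i : ℕ) * fderiv ℝ (fun y => α y (v ∘ i.succAbove) w) x (v i)

/-- The differential `d''` of superforms, acting on the `d''`-block,
with the sign `(-1)^p`. -/
def dPP {r p q : ℕ} (α : SFd r p q) : SFd r p (q + 1) := fun x v w =>
  (-1 : ℝ) ^ p * ∑ j : Fin (q + 1),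
    (-1 : ℝ) ^ (j : ℕ) * fderiv ℝ (fun y => α y v (w ∘ j.succAbove)) x (w j)

/-- A (convex) polyhedron in `ℝ^r`: a finite intersection of closed half-spaces. -/
def IsPolyhedron {r : ℕ} (σ : Set (Vec r)) : Prop :=
  ∃ (n : ℕ) (f : Fin n → (Vec r →ₗ[ℝ] ℝ)) (c : Fin n → ℝ),
    σ = {x | ∀ i, f i x ≤ c i}

/-- `τ` is a face of `σ`: either `σ` itself, or the subset of `σ` where a linear
functional bounded above on `σ` attains a given bound. -/
def IsFaceOf {r : ℕ} (τ σ : Set (Vec r)) : Prop :=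
  τ = σ ∨ ∃ (g : Vec r →ₗ[ℝ] ℝ) (c : ℝ),
    (∀ x ∈ σ, g x ≤ c) ∧ τ = {x ∈ σ | g x = c}

/-- A polyhedral complex in `ℝ^r`: a finite set of convex polyhedra, closed under
taking faces, such that the intersection of any two members is a face of both. -/
structure PolyComplex (r : ℕ) where
  polys : Set (Set (Vec r))
  finite : polys.Finite
  poly_mem : ∀ σ ∈ polys, IsPolyhedron σ
  face_mem : ∀ σ ∈ polys, ∀ τ, IsFaceOf τ σ → τ ∈ polys
  inter_face : ∀ σ ∈ polys, ∀ τ ∈ polys, IsFaceOf (σ ∩ τ) σ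

/-- The support of a polyhedral complex. -/
def PolyComplex.support {r : ℕ} (C : PolyComplex r) : Set (Vec r) :=
  ⋃ σ ∈ C.polys, σ

/-- The relative interior of a polyhedron: the polyhedron minus all its proper faces. -/
def relint {r : ℕ} (σ : Set (Vec r)) : Set (Vec r) :=
  {x ∈ σ | ∀ τ, IsFaceOf τ σ → τ ≠ σ → x ∉ τ}

/-- The polyhedral star of `σ` in `C`: the union of the relative interiors of all
members of `C` having `σ` as a face. -/
def polyStar {r : ℕ} (C : PolyComplex r) (σ : Set (Vec r)) : Set (Vec r) :=
  ⋃ τ ∈ {τ ∈ C.polys | IsFaceOf σ τ}, relint τ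

/-- `Ω` is an open subset of the support of `C` (subspace topology). -/
def OpenInSupport {r : ℕ} (C : PolyComplex r) (Ω : Set (Vec r)) : Prop :=
  ∃ U : Set (Vec r), IsOpen U ∧ Ω = U ∩ C.support

/-- `S` is star shaped with centre `z`. -/
def StarShapedWith {r : ℕ} (z : Vec r) (S : Set (Vec r)) : Prop :=
  ∀ x ∈ S, ∀ t ∈ Icc (0 : ℝ) 1, z + t • (x - z) ∈ S

/-- `Ω` is polyhedrally star shaped with centre `z`: there is a polyhedral complex `D`
such that `Ω` is an open subset of `|D|` and `σ ∩ Ω` is star shaped with centre `z`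
for every maximal `σ ∈ D`. -/
def PolyStarShaped {r : ℕ} (z : Vec r) (Ω : Set (Vec r)) : Prop :=
  ∃ D : PolyComplex r, OpenInSupport D Ω ∧
    ∀ σ ∈ D.polys, (∀ τ ∈ D.polys, IsFaceOf σ τ → τ = σ) →
      StarShapedWith z (σ ∩ Ω)

lemma isAltML_zero' {r n : ℕ} : IsAltML (fun _ : Fin n → Vec r => (0 : ℝ)) :=
  ⟨fun _ _ _ _ => by ring, fun _ _ _ _ => by ring, fun _ _ _ _ _ => rfl⟩

lemma IsAltML.const_mul' {r n : ℕ} {g : (Fin n → Vec r) → ℝ} (hg : IsAltML g) (c : ℝ) :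
    IsAltML (fun v => c * g v) := by
  obtain ⟨h1, h2, h3⟩ := hg
  exact ⟨fun v i x y => by dsimp only; rw [h1]; ring,
    fun v i c' x => by dsimp only; rw [h2]; ring,
    fun v i j hij hv => by dsimp only; rw [h3 v i j hij hv]; ring⟩

lemma isClosed_of_isPolyhedron {r : ℕ} {σ : Set (Vec r)} (h : IsPolyhedron σ) : IsClosed σ := by
  obtain ⟨n, f, c, rfl⟩ := h
  have : {x | ∀ i, f i x ≤ c i} = ⋂ i, (f i) ⁻¹' (Iic (c i)) := by
    ext x; simp
  rw [this]
  exact isClosed_iInter fun i =>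
    IsClosed.preimage (f i).continuous_of_finiteDimensional isClosed_Iic

lemma PolyComplex.isClosed_support {r : ℕ} (C : PolyComplex r) : IsClosed C.support :=
  C.finite.isClosed_biUnion fun σ hσ => isClosed_of_isPolyhedron (C.poly_mem σ hσ)

/-- Extension lemma: for `W ⊆ ℝ^r` open with `W ∩ |𝒞| = Ω`,
every superform on `Ω` — given by some `β ∈ A^{p,q}(V)` on an open `V ⊆ W` with
`V ∩ |𝒞| = Ω` — is the restriction of a superform `β̃ ∈ A^{p,q}(W)`, i.e. `β̃`
agrees with `β` on every `σ ∩ Ω` (`σ ∈ 𝒞`) when evaluated on tangent vectors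
from the linear span `L_σ`. -/
theorem superform_extension {r p q : ℕ} (C : PolyComplex r)
    (Ω W V : Set (Vec r)) (hW : IsOpen W) (hWΩ : W ∩ C.support = Ω)
    (hV : IsOpen V) (hVW : V ⊆ W) (hVΩ : V ∩ C.support = Ω)
    (β : SFd r p q) (hβ : IsSuperformOn V β) :
    ∃ βt : SFd r p q, IsSuperformOn W βt ∧
      ∀ σ ∈ C.polys, ∀ x ∈ σ ∩ Ω, ∀ (v : Fin p → Vec r) (w : Fin q → Vec r),
        (∀ i, v i ∈ vectorSpan ℝ σ) → (∀ j, w j ∈ vectorSpan ℝ σ) →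
        βt x v w = β x v w := by
  classical
  by_cases hΩ : Ω = ∅
  · refine ⟨fun _ _ _ => 0, ⟨fun _ _ _ => isAltML_zero', fun _ _ _ => isAltML_zero',
      fun v w => contDiffOn_const⟩, ?_⟩
    intro σ hσ x hx
    rw [hΩ] at hx
    exact absurd hx.2 (notMem_empty x)
  by_cases hWV : W ⊆ V
  · obtain rfl : V = W := hVW.antisymm hWV
    exact ⟨β, hβ, fun σ hσ x hx v w _ _ => rfl⟩
  -- main case
  have hΩne : Ω.Nonempty := nonempty_iff_ne_empty.2 hΩ
  have hK : IsClosed C.support := C.isClosed_support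
  have hΩV : Ω ⊆ V := by rw [← hVΩ]; exact inter_subset_left
  have hΩK : Ω ⊆ C.support := by rw [← hVΩ]; exact inter_subset_right
  have hΩW : Ω ⊆ W := hΩV.trans hVW
  have hclΩK : closure Ω ⊆ C.support := closure_minimal hΩK hK
  have hclΩW : closure Ω ∩ W ⊆ Ω := fun x hx => by
    rw [← hWΩ]; exact ⟨hx.2, hclΩK hx.1⟩
  set WV : Set (Vec r) := W \ V with hWVdef
  have hWVne : WV.Nonempty := by
    rw [Set.nonempty_iff_ne_empty]
    intro h
    exact hWV fun x hx => by
      by_contra hxV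
      exact absurd (show x ∈ WV from ⟨hx, hxV⟩) (h ▸ notMem_empty x)
  set Ue : Set (Vec r) :=
    {x | Metric.infDist x (closure Ω) < Metric.infDist x WV} with hUedef
  have hUe_open : IsOpen Ue :=
    isOpen_lt (Metric.continuous_infDist_pt _) (Metric.continuous_infDist_pt _)
  set V' : Set (Vec r) := V ∩ Ue with hV'def
  have hV'open : IsOpen V' := hV.inter hUe_open
  have hclWV : closure WV ⊆ Vᶜ := closure_minimal (fun y hy => hy.2) hV.isClosed_compl
  have hΩV' : Ω ⊆ V' := by
    intro x hx
    refine ⟨hΩV hx, ?_⟩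
    have h1 : Metric.infDist x (closure Ω) = 0 :=
      Metric.infDist_zero_of_mem (subset_closure hx)
    have hxnc : x ∉ closure WV := fun hc => hclWV hc (hΩV hx)
    have h2 : Metric.infDist x WV ≠ 0 := by
      intro h0
      exact hxnc ((Metric.mem_closure_iff_infDist_zero hWVne).2 h0)
    have h2' : 0 < Metric.infDist x WV :=
      lt_of_le_of_ne Metric.infDist_nonneg (Ne.symm h2)
    show Metric.infDist x (closure Ω) < Metric.infDist x WV
    rw [h1]; exact h2'
  have hshrink : closure V' ∩ W ⊆ V := by
    rintro x ⟨hxc, hxW⟩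
    by_contra hxV
    have hxWV : x ∈ WV := ⟨hxW, hxV⟩
    have h0 : Metric.infDist x WV = 0 := Metric.infDist_zero_of_mem hxWV
    have hle : Metric.infDist x (closure Ω) ≤ Metric.infDist x WV := by
      have hsub : closure V' ⊆
          {y | Metric.infDist y (closure Ω) ≤ Metric.infDist y WV} := by
        refine closure_minimal ?_
          (isClosed_le (Metric.continuous_infDist_pt _) (Metric.continuous_infDist_pt _))
        intro y hy
        exact le_of_lt (show Metric.infDist y (closure Ω) < Metric.infDist y WV from hy.2)
      exact hsub hxc
    have hz : Metric.infDist x (closure Ω) = 0 :=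
      le_antisymm (h0 ▸ hle) Metric.infDist_nonneg
    have hxclΩ : x ∈ closure Ω :=
      (isClosed_closure.mem_iff_infDist_zero hΩne.closure).2 hz
    exact hxV (hΩV (hclΩW ⟨hxclΩ, hxW⟩))
  obtain ⟨g, hg_supp, hg_smooth, hg_range⟩ := hV'open.exists_contDiff_support_eq (n := ⊤)
  obtain ⟨h, hh_supp, hh_smooth, hh_range⟩ :=
    (hW.sdiff isClosed_closure : IsOpen (W \ closure Ω)).exists_contDiff_support_eq (n := ⊤)
  have hg0 : ∀ x, 0 ≤ g x := fun x => (hg_range (mem_range_self x)).1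
  have hh0 : ∀ x, 0 ≤ h x := fun x => (hh_range (mem_range_self x)).1
  have hden : ∀ x ∈ W, 0 < g x + h x := by
    intro x hxW
    by_cases hxΩ : x ∈ closure Ω
    · have hxV' : x ∈ V' := hΩV' (hclΩW ⟨hxΩ, hxW⟩)
      have hgx : g x ≠ 0 := by
        rw [← Function.mem_support, hg_supp]; exact hxV'
      exact add_pos_of_pos_of_nonneg (lt_of_le_of_ne (hg0 x) (Ne.symm hgx)) (hh0 x)
    · have hhx : h x ≠ 0 := by
        rw [← Function.mem_support, hh_supp]; exact ⟨hxW, hxΩ⟩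
      exact add_pos_of_nonneg_of_pos (hg0 x) (lt_of_le_of_ne (hh0 x) (Ne.symm hhx))
  set f : Vec r → ℝ := fun x => g x / (g x + h x) with hfdef
  have hf1 : ∀ x ∈ Ω, f x = 1 := by
    intro x hx
    have hxh : h x = 0 := by
      by_contra h0
      have : x ∈ W \ closure Ω := hh_supp ▸ Function.mem_support.2 h0
      exact this.2 (subset_closure hx)
    have hgx : g x ≠ 0 := by
      rw [← Function.mem_support, hg_supp]; exact hΩV' hx
    show g x / (g x + h x) = 1
    rw [hxh, add_zero, div_self hgx]
  have hf_smooth : ContDiffOn ℝ (⊤ : ℕ∞) f W :=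
    ContDiffOn.div hg_smooth.contDiffOn (hg_smooth.add hh_smooth).contDiffOn
      (fun x hx => (hden x hx).ne')
  refine ⟨fun x v w => if x ∈ V then f x * β x v w else 0, ⟨?_, ?_, ?_⟩, ?_⟩
  · intro x hxW w
    by_cases hxV : x ∈ V
    · simp only [if_pos hxV]
      exact (hβ.1 x hxV w).const_mul' (f x)
    · simp only [if_neg hxV]
      exact isAltML_zero'
  · intro x hxW v
    by_cases hxV : x ∈ V
    · simp only [if_pos hxV]
      exact (hβ.2.1 x hxV v).const_mul' (f x)
    · simp only [if_neg hxV]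
      exact isAltML_zero'
  · intro v w
    intro x hxW
    by_cases hxV : x ∈ V
    · have h1 : ContDiffAt ℝ (⊤ : ℕ∞) (fun y => f y * β y v w) x :=
        (hf_smooth.contDiffAt (hW.mem_nhds hxW)).mul
          ((hβ.2.2 v w).contDiffAt (hV.mem_nhds hxV))
      have h2 : (fun y => if y ∈ V then f y * β y v w else 0)
          =ᶠ[nhds x] fun y => f y * β y v w := by
        filter_upwards [hV.mem_nhds hxV] with y hy
        simp only [if_pos hy]
      exact (h1.congr_of_eventuallyEq h2).contDiffWithinAt
    · have hxO : x ∈ (closure V')ᶜ := fun hc => hxV (hshrink ⟨hc, hxW⟩)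
      have h2 : (fun y => if y ∈ V then f y * β y v w else 0)
          =ᶠ[nhds x] fun _ => (0 : ℝ) := by
        filter_upwards [isClosed_closure.isOpen_compl.mem_nhds hxO] with y hy
        by_cases hyV : y ∈ V
        · have hgy : g y = 0 := by
            by_contra h0
            exact hy (subset_closure (hg_supp ▸ Function.mem_support.2 h0))
          simp only [if_pos hyV, hfdef, hgy, zero_div, zero_mul]
        · simp only [if_neg hyV]
      exact (contDiffAt_const.congr_of_eventuallyEq h2).contDiffWithinAt
  · intro σ hσ x hx v w hv hw
    have hxΩ : x ∈ Ω := hx.2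
    have hxV : x ∈ V := hΩV hxΩ
    simp only [if_pos hxV, hf1 x hxΩ, one_mul]
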